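/- Fix an integer N ≥ 2 and let H_G be the Grover Hamiltonian on ℂ^N. Then for every x ∈ ℂ^N, Re⟨x, H_G x⟩ ≥ −(1/√N)·‖x‖², and for every x ∈ ℂ^N with ⟨u + t, x⟩ = 0, Re⟨x, H_G x⟩ ≥ (1/√N)·‖x‖². In particular the smallest eigenvalue of H_G is −1/√N, it is attained only on the span of u + t, and the spectral gap of H_G is 2/√N. -/

import Mathlib

open Matrix

local notation "⟪" x ", " y "⟫" => @inner ℂ _ _ x y

lemma grover_aux1 {E : Type*} [NormedAddCommGroup E] [InnerProductSpace ℂ E]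
    (u t : E) (s : ℝ) (hs0 : 0 < s) (hs1 : s < 1)
    (huu : ⟪u, u⟫ = 1) (htt : ⟪t, t⟫ = 1)
    (hut : ⟪u, t⟫ = (s : ℂ)) (htu : ⟪t, u⟫ = (s : ℂ)) (x : E) :
    ‖⟪u, x⟫‖ ^ 2 + ‖⟪t, x⟫‖ ^ 2 ≤ (1 + s) * ‖x‖ ^ 2 := by
  have h2p : (0:ℝ) < 2 + 2 * s := by linarith
  have h2m : (0:ℝ) < 2 - 2 * s := by linarith
  set c : ℝ := (Real.sqrt (2 + 2 * s))⁻¹ with hc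
  set d : ℝ := (Real.sqrt (2 - 2 * s))⁻¹ with hd
  have hcpos : 0 < c := by positivity
  have hdpos : 0 < d := by positivity
  have hc2 : c ^ 2 * (2 + 2 * s) = 1 := by
    rw [hc, ← Real.sqrt_inv, Real.sq_sqrt (by positivity)]
    field_simp
  have hd2 : d ^ 2 * (2 - 2 * s) = 1 := by
    rw [hd, ← Real.sqrt_inv, Real.sq_sqrt (by positivity)]
    exact inv_mul_cancel₀ h2m.ne'
  set e : E := (c : ℂ) • (u + t) with he
  set f : E := (d : ℂ) • (u - t) with hf
  have hpp : ⟪u + t, u + t⟫ = ((2 + 2*s : ℝ) : ℂ) := by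
    rw [inner_add_left, inner_add_right, inner_add_right, huu, htt, hut, htu]
    push_cast; ring
  have hpm : ⟪u + t, u - t⟫ = 0 := by
    rw [inner_add_left, inner_sub_right, inner_sub_right, huu, htt, hut, htu]
    ring
  have hmp : ⟪u - t, u + t⟫ = 0 := by
    rw [inner_sub_left, inner_add_right, inner_add_right, huu, htt, hut, htu]
    ring
  have hmm : ⟪u - t, u - t⟫ = ((2 - 2*s : ℝ) : ℂ) := by
    rw [inner_sub_left, inner_sub_right, inner_sub_right, huu, htt, hut, htu]
    push_cast; ring
  have hee : ⟪e, e⟫ = 1 := by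
    rw [he, inner_smul_left, inner_smul_right, hpp, Complex.conj_ofReal,
      ← Complex.ofReal_mul, ← Complex.ofReal_mul]
    norm_cast
    nlinarith [hc2]
  have hff : ⟪f, f⟫ = 1 := by
    rw [hf, inner_smul_left, inner_smul_right, hmm, Complex.conj_ofReal,
      ← Complex.ofReal_mul, ← Complex.ofReal_mul]
    norm_cast
    nlinarith [hd2]
  have hef : ⟪e, f⟫ = 0 := by
    rw [he, hf, inner_smul_left, inner_smul_right, hpm]; ring
  have hfe : ⟪f, e⟫ = 0 := by
    rw [he, hf, inner_smul_left, inner_smul_right, hmp]; ring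
  have hv : Orthonormal ℂ ![e, f] := by
    rw [orthonormal_iff_ite]
    intro i j
    fin_cases i <;> fin_cases j <;> simp [hee, hef, hfe, hff, -inner_self_eq_norm_sq_to_K]
  have hb := hv.sum_inner_products_le (s := Finset.univ) x
  rw [Fin.sum_univ_two] at hb
  simp only [Matrix.cons_val_zero, Matrix.cons_val_one, Matrix.head_cons] at hb
  set a : ℂ := ⟪u, x⟫ with ha
  set b : ℂ := ⟪t, x⟫ with hbb
  have hea : ⟪e, x⟫ = (c : ℂ) * (a + b) := by
    rw [he, inner_smul_left, Complex.conj_ofReal, inner_add_left, ha, hbb]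
  have hfa : ⟪f, x⟫ = (d : ℂ) * (a - b) := by
    rw [hf, inner_smul_left, Complex.conj_ofReal, inner_sub_left, ha, hbb]
  rw [hea, hfa] at hb
  have hne : ‖(c:ℂ) * (a+b)‖ = c * ‖a+b‖ := by
    rw [norm_mul, Complex.norm_real, Real.norm_of_nonneg hcpos.le]
  have hnf : ‖(d:ℂ) * (a-b)‖ = d * ‖a-b‖ := by
    rw [norm_mul, Complex.norm_real, Real.norm_of_nonneg hdpos.le]
  rw [hne, hnf, mul_pow, mul_pow] at hb
  have hcc : c ^ 2 = 1 / (2 + 2*s) := by rw [eq_div_iff h2p.ne']; exact hc2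
  have hdd : d ^ 2 = 1 / (2 - 2*s) := by rw [eq_div_iff h2m.ne']; exact hd2
  rw [hcc, hdd] at hb
  have hpar' : ‖a+b‖^2 + ‖a-b‖^2 = 2*(‖a‖^2+‖b‖^2) := by
    have hpar := parallelogram_law_with_norm ℂ a b
    simpa [pow_two] using hpar
  have hA : (0:ℝ) ≤ ‖a+b‖^2 := by positivity
  have hB : (0:ℝ) ≤ ‖a-b‖^2 := by positivity
  have hX : (0:ℝ) ≤ ‖x‖^2 := by positivity
  have hb2 : (2-2*s) * ‖a+b‖^2 + (2+2*s) * ‖a-b‖^2 ≤ ((2+2*s)*(2-2*s)) * ‖x‖^2 := by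
    have h := mul_le_mul_of_nonneg_left hb (mul_pos h2p h2m).le
    calc (2-2*s) * ‖a+b‖^2 + (2+2*s) * ‖a-b‖^2
        = (2+2*s)*(2-2*s) * (1/(2+2*s) * ‖a+b‖^2 + 1/(2-2*s) * ‖a-b‖^2) := by
          field_simp [(by linarith : (0:ℝ) < 1 + s).ne', (by linarith : (0:ℝ) < 1 - s).ne']
      _ ≤ _ := h
  nlinarith [hb2, hpar', hA, hB, hX, mul_nonneg hs0.le hB]

lemma grover_aux2 {E : Type*} [NormedAddCommGroup E] [InnerProductSpace ℂ E]
    (u t : E) (s : ℝ) (hs0 : 0 < s) (hs1 : s < 1)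
    (huu : ⟪u, u⟫ = 1) (htt : ⟪t, t⟫ = 1)
    (hut : ⟪u, t⟫ = (s : ℂ)) (htu : ⟪t, u⟫ = (s : ℂ)) (x : E)
    (hx : ⟪u, x⟫ + ⟪t, x⟫ = 0) :
    2 * ‖⟪u, x⟫‖ ^ 2 ≤ (1 - s) * ‖x‖ ^ 2 := by
  have hmm : ⟪u - t, u - t⟫ = ((2 - 2*s : ℝ) : ℂ) := by
    rw [inner_sub_left, inner_sub_right, inner_sub_right, huu, htt, hut, htu]
    push_cast; ring
  have hnm : ‖u - t‖ ^ 2 = 2 - 2*s := by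
    rw [← inner_self_eq_norm_sq (𝕜 := ℂ), hmm]
    simp
  have hcs := norm_inner_le_norm (𝕜 := ℂ) (u - t) x
  have hix : ⟪u - t, x⟫ = 2 * ⟪u, x⟫ := by
    rw [inner_sub_left]
    have : ⟪t, x⟫ = -⟪u, x⟫ := by linear_combination hx
    rw [this]; ring
  rw [hix] at hcs
  have h2 : ‖(2 : ℂ) * ⟪u, x⟫‖ = 2 * ‖⟪u, x⟫‖ := by
    rw [norm_mul]; norm_num
  rw [h2] at hcs
  have hx0 : (0:ℝ) ≤ ‖x‖ := norm_nonneg x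
  have ha0 : (0:ℝ) ≤ ‖⟪u, x⟫‖ := norm_nonneg _
  have hcs2 := mul_self_le_mul_self (by positivity) hcs
  nlinarith [hcs2, hnm, sq_nonneg ‖x‖, norm_nonneg x]


/-- Spectral bounds for the Grover Hamiltonian `H_G x = x - ⟨u,x⟩u - ⟨t,x⟩t`:
`Re⟨x, H_G x⟩ ≥ -(1/√N)‖x‖²` for all `x`, and `Re⟨x, H_G x⟩ ≥ (1/√N)‖x‖²` for all
`x ⊥ (u+t)`. In particular `-(1/√N)` is the smallest eigenvalue, attained exactly on
the span of `u + t`, and the spectral gap is `2/√N`. -/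
theorem grover_hamiltonian_gap (N : ℕ) (hN : 2 ≤ N) (i₀ : Fin N) :
    let t : Fin N → ℂ := Pi.single i₀ 1
    let u : Fin N → ℂ := fun _ => ((1 / Real.sqrt N : ℝ) : ℂ)
    let HG : (Fin N → ℂ) → (Fin N → ℂ) :=
      fun x => x - (star u ⬝ᵥ x) • u - (star t ⬝ᵥ x) • t
    (∀ x : Fin N → ℂ, -(1 / Real.sqrt N) * (star x ⬝ᵥ x).re ≤ (star x ⬝ᵥ HG x).re) ∧
    (∀ x : Fin N → ℂ, star (u + t) ⬝ᵥ x = 0 →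
      1 / Real.sqrt N * (star x ⬝ᵥ x).re ≤ (star x ⬝ᵥ HG x).re) ∧
    HG (u + t) = ((-(1 / Real.sqrt N) : ℝ) : ℂ) • (u + t) ∧
    (∀ x : Fin N → ℂ, HG x = ((-(1 / Real.sqrt N) : ℝ) : ℂ) • x →
      ∃ c : ℂ, x = c • (u + t)) := by
  intro t u HG
  have ht_def : t = Pi.single i₀ 1 := rfl
  have hu_def : u = fun _ => ((1 / Real.sqrt N : ℝ) : ℂ) := rfl
  have hHG_def : ∀ x, HG x = x - (star u ⬝ᵥ x) • u - (star t ⬝ᵥ x) • t := fun _ => rfl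
  set s : ℝ := 1 / Real.sqrt N with hs
  have hNpos : (0:ℝ) < N := by positivity
  have hsqrt1 : (1:ℝ) < Real.sqrt N := by
    rw [show (1:ℝ) = Real.sqrt 1 from Real.sqrt_one.symm]
    apply Real.sqrt_lt_sqrt (by norm_num)
    exact_mod_cast lt_of_lt_of_le one_lt_two hN
  have hs0 : 0 < s := by rw [hs]; positivity
  have hs1 : s < 1 := by
    rw [hs, div_lt_one (by linarith)]; exact hsqrt1
  -- dot product facts
  have huu : star u ⬝ᵥ u = 1 := by
    rw [hu_def]
    simp only [dotProduct, Pi.star_apply, Complex.star_def, Complex.conj_ofReal,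
      ← Complex.ofReal_mul, Finset.sum_const, Finset.card_univ, Fintype.card_fin,
      nsmul_eq_mul]
    have hss : s * s = ((N:ℝ))⁻¹ := by
      rw [hs, div_mul_div_comm, one_mul, Real.mul_self_sqrt hNpos.le, one_div]
    rw [hss]
    push_cast
    rw [mul_inv_cancel₀ (by exact_mod_cast hNpos.ne' : (N:ℂ) ≠ 0)]
  have htt : star t ⬝ᵥ t = 1 := by
    rw [ht_def]
    simp [dotProduct, Pi.single_apply, apply_ite (star : ℂ → ℂ)]
  have hut : star u ⬝ᵥ t = (s:ℂ) := by
    rw [ht_def, hu_def]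
    simp [dotProduct, Pi.single_apply, hs]
  have htu : star t ⬝ᵥ u = (s:ℂ) := by
    rw [ht_def, hu_def]
    simp [dotProduct, Pi.single_apply, apply_ite (star : ℂ → ℂ), hs]
  -- translation to EuclideanSpace
  have key : ∀ v w : Fin N → ℂ,
      ⟪(WithLp.equiv 2 (Fin N → ℂ)).symm v, (WithLp.equiv 2 (Fin N → ℂ)).symm w⟫
        = star v ⬝ᵥ w := fun v w => by
    simp [PiLp.inner_apply, dotProduct, mul_comm]
  have keyre : ∀ v : Fin N → ℂ,
      (star v ⬝ᵥ v).re = ‖(WithLp.equiv 2 (Fin N → ℂ)).symm v‖ ^ 2 := by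
    intro v
    rw [← key, ← RCLike.re_to_complex]
    exact inner_self_eq_norm_sq _
  have hz : ∀ z : ℂ, (z * star z).re = ‖z‖ ^ 2 := by
    intro z
    rw [Complex.star_def, Complex.mul_conj]
    simp [Complex.normSq_eq_norm_sq, ← Complex.ofReal_pow]
  have hdecomp : ∀ x : Fin N → ℂ, (star x ⬝ᵥ HG x).re
      = (star x ⬝ᵥ x).re - ‖star u ⬝ᵥ x‖ ^ 2 - ‖star t ⬝ᵥ x‖ ^ 2 := by
    intro x
    rw [hHG_def, dotProduct_sub, dotProduct_sub,
      dotProduct_smul, dotProduct_smul, smul_eq_mul, smul_eq_mul,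
      Matrix.star_dotProduct x u, Matrix.star_dotProduct x t]
    simp only [Complex.sub_re, hz]
  refine ⟨?_, ?_, ?_, ?_⟩
  · intro x
    have h1 := grover_aux1 ((WithLp.equiv 2 (Fin N → ℂ)).symm u)
      ((WithLp.equiv 2 (Fin N → ℂ)).symm t) s hs0 hs1
      (by rw [key]; exact huu) (by rw [key]; exact htt)
      (by rw [key]; exact hut) (by rw [key]; exact htu)
      ((WithLp.equiv 2 (Fin N → ℂ)).symm x)
    rw [key, key, ← keyre x] at h1
    rw [hdecomp x]
    have hX : 0 ≤ (star x ⬝ᵥ x).re := by rw [keyre]; positivity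
    nlinarith [h1, hX]
  · intro x hx
    rw [star_add, add_dotProduct] at hx
    have h2 := grover_aux2 ((WithLp.equiv 2 (Fin N → ℂ)).symm u)
      ((WithLp.equiv 2 (Fin N → ℂ)).symm t) s hs0 hs1
      (by rw [key]; exact huu) (by rw [key]; exact htt)
      (by rw [key]; exact hut) (by rw [key]; exact htu)
      ((WithLp.equiv 2 (Fin N → ℂ)).symm x) (by rw [key, key]; exact hx)
    rw [key, ← keyre x] at h2
    have hba : star t ⬝ᵥ x = -(star u ⬝ᵥ x) := by linear_combination hx
    rw [hdecomp x, hba, norm_neg]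
    linarith [h2]
  · rw [hHG_def, dotProduct_add, dotProduct_add, huu, htt, hut, htu,
      Complex.ofReal_neg]
    module
  · intro x hx
    rw [hHG_def, Complex.ofReal_neg] at hx
    set a := star u ⬝ᵥ x with ha
    set b := star t ⬝ᵥ x with hb
    have h1 : (1 + (s:ℂ)) • x = a • u + b • t := by
      rw [← sub_eq_zero]
      calc (1 + (s:ℂ)) • x - (a • u + b • t)
          = (x - a • u - b • t) - (-(s:ℂ)) • x := by module
        _ = 0 := by rw [hx]; simp
    have hu1 : star u ⬝ᵥ ((1 + (s:ℂ)) • x) = star u ⬝ᵥ (a • u + b • t) := by rw [h1]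
    rw [dotProduct_smul, dotProduct_add, dotProduct_smul,
      dotProduct_smul, huu, hut] at hu1
    simp only [smul_eq_mul, mul_one, ← ha] at hu1
    have hsne : (s:ℂ) ≠ 0 := Complex.ofReal_ne_zero.mpr hs0.ne'
    have hab : a = b := by
      apply mul_left_cancel₀ hsne
      linear_combination hu1
    have hne : (1 + (s:ℂ)) ≠ 0 := by
      intro h
      have h' := congrArg Complex.re h
      simp at h'
      linarith
    refine ⟨(1 + (s:ℂ))⁻¹ * a, ?_⟩
    calc x = (1 + (s:ℂ))⁻¹ • ((1 + (s:ℂ)) • x) := (inv_smul_smul₀ hne x).symm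
      _ = (1 + (s:ℂ))⁻¹ • (a • (u + t)) := by rw [h1, ← hab]; module
      _ = ((1 + (s:ℂ))⁻¹ * a) • (u + t) := smul_smul _ _ _
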